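/- Let k be a heat-kernel-type function satisfying |k(t,s,ξ,x)| ≤ M (t−s)^{−n/2} exp( −δ|ξ−x|²/(t−s) + δ̃(t−s) ) for ξ, x ∈ Ω̄ ⊂ ℝⁿ and 0 ≤ s < t ≤ τ, with M, δ > 0 and δ̃ ∈ ℝ. Let p,q ∈ (1,∞) with 1/p + 1/q = 1 and q > np/2. Then for the point-evaluation output (CU(t,s)φ := ∫_Ω k(t,s,c,x)φ(x)dx at a fixed point c ∈ Ω), there exists a constant γ > 0 such that for all φ ∈ L^q(Ω) and all 0 ≤ s < τ' < τ: ∫_s^{τ'} |∫_Ω k(t,s,c,x)φ(x) dx|^p dt ≤ γ^p ‖φ‖_{L^q(Ω)}^p. The proof uses Hölder's inequality ‖k(t,s,c,·)‖_{L^p(Ω)} ≤ C (t−s)^{−n/(2q)} and the integrability of (t−s)^{−np/(2q)} on (s,τ'), which holds since np/(2q) < 1. -/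

import Mathlib

open MeasureTheory Set

/-- Gaussian integral bound on all of `EuclideanSpace ℝ (Fin n)`, centered at `c₀`. -/
lemma stmt13_gauss {n : ℕ} (c₀ : EuclideanSpace ℝ (Fin n)) {b : ℝ} (hb : 0 < b) :
    Integrable (fun x : EuclideanSpace ℝ (Fin n) => Real.exp (-b * ‖c₀ - x‖ ^ 2)) ∧
    ∫ x : EuclideanSpace ℝ (Fin n), Real.exp (-b * ‖c₀ - x‖ ^ 2)
      = (Real.pi / b) ^ ((n : ℝ) / 2) := by
  have h0 : Integrable (fun v : EuclideanSpace ℝ (Fin n) => Real.exp (-b * ‖v‖ ^ 2)) := by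
    have h := (GaussianFourier.integrable_cexp_neg_mul_sq_norm_add (b := (b : ℂ))
      (by simpa using hb) 0 (0 : EuclideanSpace ℝ (Fin n))).norm
    refine h.congr (Filter.Eventually.of_forall fun v => ?_)
    simp [Complex.norm_exp]; left; norm_cast
  constructor
  · have h1 := h0.comp_sub_right c₀
    refine h1.congr (Filter.Eventually.of_forall fun v => ?_)
    simp [norm_sub_rev]
  · rw [show (fun x : EuclideanSpace ℝ (Fin n) => Real.exp (-b * ‖c₀ - x‖ ^ 2))
        = fun x => Real.exp (-b * ‖x - c₀‖ ^ 2) by funext x; rw [norm_sub_rev]]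
    rw [integral_sub_right_eq_self (fun x : EuclideanSpace ℝ (Fin n) => Real.exp (-b * ‖x‖ ^ 2)) c₀]
    rw [GaussianFourier.integral_rexp_neg_mul_sq_norm hb]
    norm_num [finrank_euclideanSpace_fin]

set_option maxHeartbeats 1000000 in
/-- `L^p`-admissibility of the point observation for an evolution family given
by a kernel with a Gaussian upper bound: there is `γ > 0` such that
`∫_s^{τ'} |(CU(t,s)φ)(c₀)|^p dt ≤ γ^p ‖φ‖_{L^q}^p` whenever `q > np/2`. -/
theorem stmt13 (n : ℕ) (hn : 0 < n)
    (Ω : Set (EuclideanSpace ℝ (Fin n))) (hΩo : IsOpen Ω)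
    (hΩb : Bornology.IsBounded Ω)
    (τ M δ δ' : ℝ) (hτ : 0 < τ) (hM : 0 < M) (hδ : 0 < δ)
    (k : ℝ → ℝ → EuclideanSpace ℝ (Fin n) → EuclideanSpace ℝ (Fin n) → ℝ)
    (hk : ∀ s t : ℝ, 0 ≤ s → s < t → t ≤ τ →
      ∀ ξ ∈ closure Ω, ∀ x ∈ closure Ω,
        |k t s ξ x| ≤ M * (t - s) ^ (-(n : ℝ) / 2) *
          Real.exp (-δ * ‖ξ - x‖ ^ 2 / (t - s) + δ' * (t - s)))
    (p q : ℝ) (hp : 1 < p) (hq : 1 < q) (hpq : 1 / p + 1 / q = 1)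
    (hqnp : (n : ℝ) * p / 2 < q)
    (c₀ : EuclideanSpace ℝ (Fin n)) (hc₀ : c₀ ∈ Ω) :
    ∃ γ > (0 : ℝ), ∀ φ : EuclideanSpace ℝ (Fin n) → ℝ,
      MemLp φ (ENNReal.ofReal q) (volume.restrict Ω) →
      ∀ s τ' : ℝ, 0 ≤ s → s < τ' → τ' < τ →
        ∫ t in Ioc s τ', |∫ x in Ω, k t s c₀ x * φ x| ^ p ≤
          γ ^ p * (∫ x in Ω, |φ x| ^ q) ^ (p / q) := by
  have hp0 : 0 < p := lt_trans one_pos hp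
  have hq0 : 0 < q := lt_trans one_pos hq
  -- conjugate exponent algebra
  have hpq' : p / q = p - 1 := by
    have h1 : 1 / q = 1 - 1 / p := by linarith
    have h2 : p * (1 / q) = p * (1 - 1 / p) := by rw [h1]
    rw [mul_one_div] at h2
    rw [h2, mul_sub, mul_one, mul_one_div, div_self hp0.ne']
  set α : ℝ := (n : ℝ) * p / (2 * q) with hα_def
  have hα : α = (n : ℝ) * (p - 1) / 2 := by
    rw [hα_def, ← hpq']; field_simp
  have hα1 : α < 1 := by
    rw [hα_def, div_lt_one (by positivity)]
    linarith
  have hα0 : 0 ≤ α := by rw [hα_def]; positivity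
  haveI : IsFiniteMeasure (volume.restrict Ω) :=
    ⟨by rw [Measure.restrict_apply_univ]; exact hΩb.measure_lt_top⟩
  set B : ℝ := M ^ p * Real.exp (|δ'| * p * τ) * (Real.pi / (p * δ)) ^ ((n : ℝ) / 2) with hB_def
  have hB : 0 < B := by
    apply mul_pos (mul_pos (Real.rpow_pos_of_pos hM p) (Real.exp_pos _))
    exact Real.rpow_pos_of_pos (by positivity) _
  have h1α : 0 < 1 - α := by linarith
  have hBτα : 0 < B * (τ + 1) / (1 - α) := div_pos (mul_pos hB (by linarith)) h1α
  refine ⟨(B * (τ + 1) / (1 - α)) ^ (1 / p),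
    Real.rpow_pos_of_pos hBτα _, ?_⟩
  have hγp : ((B * (τ + 1) / (1 - α)) ^ (1 / p) : ℝ) ^ p = B * (τ + 1) / (1 - α) := by
    rw [← Real.rpow_mul hBτα.le, one_div_mul_cancel hp0.ne', Real.rpow_one]
  intro φ hφ s τ' hs hsτ' hτ'τ
  have hQint_nonneg : 0 ≤ ∫ x in Ω, |φ x| ^ q :=
    integral_nonneg fun x => Real.rpow_nonneg (abs_nonneg _) _
  set Q : ℝ := (∫ x in Ω, |φ x| ^ q) ^ (1 / q) with hQ_def
  have hQ0 : 0 ≤ Q := Real.rpow_nonneg hQint_nonneg _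
  -- the key pointwise-in-`t` estimate
  have key : ∀ t ∈ Ioc s τ',
      |∫ x in Ω, k t s c₀ x * φ x| ^ p ≤ B * Q ^ p * (t - s) ^ (-α) := by
    rintro t ⟨hst, htτ'⟩
    have htτ : t ≤ τ := le_of_lt (lt_of_le_of_lt htτ' hτ'τ)
    set d : ℝ := t - s with hd_def
    have hd : 0 < d := sub_pos.2 hst
    have hdτ : d ≤ τ := by rw [hd_def]; linarith
    set A : ℝ := M * d ^ (-(n : ℝ) / 2) * Real.exp (δ' * d) with hA_def
    have hA0 : 0 < A := by
      apply mul_pos (mul_pos hM (Real.rpow_pos_of_pos hd _)) (Real.exp_pos _)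
    set G : EuclideanSpace ℝ (Fin n) → ℝ :=
      fun x => A * Real.exp (-δ * ‖c₀ - x‖ ^ 2 / d) with hG_def
    have hGcont : Continuous G := by
      apply continuous_const.mul
      apply Real.continuous_exp.comp
      apply Continuous.div_const
      exact (continuous_const.mul (((continuous_const.sub continuous_id).norm).pow 2))
    have hG0 : ∀ x, 0 ≤ G x := fun x => by
      exact mul_nonneg hA0.le (Real.exp_nonneg _)
    have hGA : ∀ x, G x ≤ A := fun x => by
      have hle : Real.exp (-δ * ‖c₀ - x‖ ^ 2 / d) ≤ 1 := by
        rw [Real.exp_le_one_iff, neg_mul, neg_div, neg_nonpos]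
        positivity
      calc G x ≤ A * 1 := mul_le_mul_of_nonneg_left hle hA0.le
        _ = A := mul_one A
    have hφint : Integrable φ (volume.restrict Ω) :=
      hφ.integrable (by exact_mod_cast ENNReal.one_le_ofReal.2 hq.le)
    have hGφint : Integrable (fun x => G x * |φ x|) (volume.restrict Ω) := by
      refine hφint.abs.bdd_mul hGcont.aestronglyMeasurable (c := A) (Filter.Eventually.of_forall fun x => ?_)
      rw [Real.norm_eq_abs, abs_of_nonneg (hG0 x)]; exact hGA x
    have step1 : |∫ x in Ω, k t s c₀ x * φ x| ≤ ∫ x in Ω, G x * |φ x| := by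
      have hb : ∀ᵐ x ∂(volume.restrict Ω), ‖k t s c₀ x * φ x‖ ≤ G x * |φ x| := by
        filter_upwards [ae_restrict_mem hΩo.measurableSet] with x hx
        rw [Real.norm_eq_abs, abs_mul]
        refine mul_le_mul_of_nonneg_right ?_ (abs_nonneg _)
        have hkb := hk s t hs hst htτ c₀ (subset_closure hc₀) x (subset_closure hx)
        rw [← hd_def] at hkb
        calc |k t s c₀ x| ≤ M * d ^ (-(n : ℝ) / 2) *
              Real.exp (-δ * ‖c₀ - x‖ ^ 2 / d + δ' * d) := hkb
          _ = G x := by rw [hG_def, hA_def, Real.exp_add]; ring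
      simpa [Real.norm_eq_abs] using norm_integral_le_of_norm_le hGφint hb
    have step2 : ∫ x in Ω, G x * |φ x| ≤ (∫ x in Ω, G x ^ p) ^ (1 / p) * Q := by
      have hpq'' : Real.HolderConjugate p q := Real.holderConjugate_iff.mpr ⟨hp, by rw [← one_div, ← one_div]; exact hpq⟩
      have hGmem : MemLp G (ENNReal.ofReal p) (volume.restrict Ω) := by
        refine MemLp.of_bound hGcont.aestronglyMeasurable A
          (Filter.Eventually.of_forall fun x => ?_)
        rw [Real.norm_eq_abs, abs_of_nonneg (hG0 x)]; exact hGA x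
      have hφmem : MemLp (fun x => |φ x|) (ENNReal.ofReal q) (volume.restrict Ω) := by
        simpa [Real.norm_eq_abs] using hφ.norm
      exact integral_mul_le_Lp_mul_Lq_of_nonneg hpq''
        (Filter.Eventually.of_forall fun x => hG0 x)
        (Filter.Eventually.of_forall fun x => abs_nonneg _) hGmem hφmem
    have hGp_nonneg : 0 ≤ ∫ x in Ω, G x ^ p :=
      integral_nonneg fun x => Real.rpow_nonneg (hG0 x) p
    have step3 : ∫ x in Ω, G x ^ p ≤ B * d ^ (-α) := by
      have hb' : 0 < p * δ / d := by positivity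
      obtain ⟨hgi, hgv⟩ := stmt13_gauss c₀ hb'
      have hexp : ∀ x : EuclideanSpace ℝ (Fin n),
          G x ^ p = A ^ p * Real.exp (-(p * δ / d) * ‖c₀ - x‖ ^ 2) := fun x => by
        rw [hG_def]
        rw [Real.mul_rpow hA0.le (Real.exp_nonneg _), ← Real.exp_mul,
          show -δ * ‖c₀ - x‖ ^ 2 / d * p = -(p * δ / d) * ‖c₀ - x‖ ^ 2 by
            field_simp [hd.ne']]
      have hdpow : d ^ ((-(n : ℝ) / 2) * p) * d ^ ((n : ℝ) / 2) = d ^ (-α) := by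
        rw [← Real.rpow_add hd]
        congr 1
        rw [hα]; ring
      have hπ : Real.pi / (p * δ / d) = Real.pi / (p * δ) * d := by
        field_simp
      have hApow : A ^ p = M ^ p * d ^ ((-(n : ℝ) / 2) * p) * Real.exp (δ' * d * p) := by
        rw [hA_def, Real.mul_rpow (mul_nonneg hM.le (Real.rpow_nonneg hd.le _))
          (Real.exp_nonneg _), Real.mul_rpow hM.le (Real.rpow_nonneg hd.le _),
          ← Real.rpow_mul hd.le, ← Real.exp_mul]
      have hexp_le : Real.exp (δ' * d * p) ≤ Real.exp (|δ'| * p * τ) := by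
        apply Real.exp_le_exp.2
        have h1 : δ' * d ≤ |δ'| * τ :=
          le_trans (mul_le_mul_of_nonneg_right (le_abs_self δ') hd.le)
            (mul_le_mul_of_nonneg_left hdτ (abs_nonneg δ'))
        calc δ' * d * p ≤ |δ'| * τ * p := mul_le_mul_of_nonneg_right h1 hp0.le
          _ = |δ'| * p * τ := by ring
      calc ∫ x in Ω, G x ^ p
          = A ^ p * ∫ x in Ω, Real.exp (-(p * δ / d) * ‖c₀ - x‖ ^ 2) := by
            simp_rw [hexp]; exact integral_const_mul _ _
        _ ≤ A ^ p * (Real.pi / (p * δ / d)) ^ ((n : ℝ) / 2) := by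
            refine mul_le_mul_of_nonneg_left ?_ (Real.rpow_nonneg hA0.le _)
            calc ∫ x in Ω, Real.exp (-(p * δ / d) * ‖c₀ - x‖ ^ 2)
                ≤ ∫ x, Real.exp (-(p * δ / d) * ‖c₀ - x‖ ^ 2) :=
                  setIntegral_le_integral hgi
                    (Filter.Eventually.of_forall fun x => Real.exp_nonneg _)
              _ = (Real.pi / (p * δ / d)) ^ ((n : ℝ) / 2) := hgv
        _ = (M ^ p * (Real.pi / (p * δ)) ^ ((n : ℝ) / 2) * d ^ (-α)) *
              Real.exp (δ' * d * p) := by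
            rw [hApow, hπ, Real.mul_rpow (by positivity) hd.le]
            rw [show M ^ p * d ^ ((-(n : ℝ) / 2) * p) * Real.exp (δ' * d * p) *
                ((Real.pi / (p * δ)) ^ ((n : ℝ) / 2) * d ^ ((n : ℝ) / 2))
              = (M ^ p * (Real.pi / (p * δ)) ^ ((n : ℝ) / 2) *
                (d ^ ((-(n : ℝ) / 2) * p) * d ^ ((n : ℝ) / 2))) *
                  Real.exp (δ' * d * p) by ring, hdpow]
        _ ≤ (M ^ p * (Real.pi / (p * δ)) ^ ((n : ℝ) / 2) * d ^ (-α)) *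
              Real.exp (|δ'| * p * τ) := by
            refine mul_le_mul_of_nonneg_left hexp_le (by positivity)
        _ = B * d ^ (-α) := by rw [hB_def]; ring
    have habs : |∫ x in Ω, k t s c₀ x * φ x| ^ p ≤
        ((∫ x in Ω, G x ^ p) ^ (1 / p) * Q) ^ p :=
      Real.rpow_le_rpow (abs_nonneg _) (step1.trans step2) hp0.le
    have hsplit : ((∫ x in Ω, G x ^ p) ^ (1 / p) * Q) ^ p = (∫ x in Ω, G x ^ p) * Q ^ p := by
      rw [Real.mul_rpow (Real.rpow_nonneg hGp_nonneg _) hQ0,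
        ← Real.rpow_mul hGp_nonneg, one_div_mul_cancel hp0.ne', Real.rpow_one]
    calc |∫ x in Ω, k t s c₀ x * φ x| ^ p
        ≤ (∫ x in Ω, G x ^ p) * Q ^ p := by rw [← hsplit]; exact habs
      _ ≤ (B * d ^ (-α)) * Q ^ p :=
          mul_le_mul_of_nonneg_right step3 (Real.rpow_nonneg hQ0 _)
      _ = B * Q ^ p * d ^ (-α) := by ring
  -- integrability of the dominating function in `t`
  have hint_pow : IntegrableOn (fun t : ℝ => (t - s) ^ (-α)) (Ioc s τ') volume := by
    have h1 : IntervalIntegrable (fun u : ℝ => u ^ (-α)) volume 0 (τ' - s) :=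
      intervalIntegral.intervalIntegrable_rpow' (by linarith)
    have h2 := h1.comp_sub_right s
    rw [zero_add, sub_add_cancel] at h2
    exact h2.1
  have hint_rhs : IntegrableOn (fun t : ℝ => B * Q ^ p * (t - s) ^ (-α)) (Ioc s τ') volume :=
    hint_pow.const_mul _
  have hmono : ∫ t in Ioc s τ', |∫ x in Ω, k t s c₀ x * φ x| ^ p ≤
      ∫ t in Ioc s τ', B * Q ^ p * (t - s) ^ (-α) := by
    refine integral_mono_of_nonneg
      (Filter.Eventually.of_forall fun t => Real.rpow_nonneg (abs_nonneg _) _) hint_rhs ?_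
    filter_upwards [ae_restrict_mem measurableSet_Ioc] with t ht
    exact key t ht
  have hIoc : ∫ t in Ioc s τ', (t - s : ℝ) ^ (-α) = (τ' - s) ^ (1 - α) / (1 - α) := by
    rw [← intervalIntegral.integral_of_le hsτ'.le,
      intervalIntegral.integral_comp_sub_right (fun u : ℝ => u ^ (-α)) s, sub_self,
      integral_rpow (Or.inl (by linarith)),
      Real.zero_rpow (ne_of_gt (by linarith : (0:ℝ) < -α + 1))]
    rw [show -α + 1 = 1 - α by ring]
    ring
  have hpow_le : (τ' - s) ^ (1 - α) ≤ τ + 1 := by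
    rcases le_or_gt (τ' - s) 1 with h | h
    · have h1 : (τ' - s) ^ (1 - α) ≤ 1 :=
        Real.rpow_le_one (by linarith) h (by linarith)
      linarith
    · calc (τ' - s) ^ (1 - α) ≤ (τ' - s) ^ (1 : ℝ) :=
          Real.rpow_le_rpow_of_exponent_le h.le (by linarith)
        _ = τ' - s := Real.rpow_one _
        _ ≤ τ + 1 := by linarith
  have hQp : Q ^ p = (∫ x in Ω, |φ x| ^ q) ^ (p / q) := by
    rw [hQ_def, ← Real.rpow_mul hQint_nonneg]
    congr 1
    ring
  calc ∫ t in Ioc s τ', |∫ x in Ω, k t s c₀ x * φ x| ^ p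
      ≤ ∫ t in Ioc s τ', B * Q ^ p * (t - s) ^ (-α) := hmono
    _ = B * Q ^ p * ((τ' - s) ^ (1 - α) / (1 - α)) := by
        rw [integral_const_mul, hIoc]
    _ ≤ B * Q ^ p * ((τ + 1) / (1 - α)) := by
        refine mul_le_mul_of_nonneg_left ?_ (by positivity)
        exact (div_le_div_iff_of_pos_right h1α).2 hpow_le
    _ = ((B * (τ + 1) / (1 - α)) ^ (1 / p)) ^ p * (∫ x in Ω, |φ x| ^ q) ^ (p / q) := by
        rw [hγp, hQp]; ring
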